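/- In a well-ordered set, for elements x < y, the α-th condensation classes of x and y coincide if and only if the order type of the interval [x, y) is strictly less than ω^α. -/

import Mathlib

namespace Stmt4Aux

open Ordinal Set

variable {L : Type} [LinearOrder L] [WellFoundedLT L]

/-- order type of a subset of `L` -/
noncomputable def itype (s : Set L) : Ordinal :=
  Ordinal.type (Subrel ((· < ·) : L → L → Prop) (· ∈ s))

lemma itype_mono {s t : Set L} (h : s ⊆ t) : itype s ≤ itype t :=
  type_le_iff'.2 ⟨⟨⟨Set.inclusion h, Set.inclusion_injective h⟩, Iff.rfl⟩⟩

lemma itype_empty : itype (∅ : Set L) = 0 := by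
  rw [itype, Ordinal.type_eq_zero_iff_isEmpty]
  exact Set.isEmpty_coe_sort.2 rfl

lemma itype_ne_zero {s : Set L} (h : s.Nonempty) : itype s ≠ 0 := by
  rw [itype, Ne, Ordinal.type_eq_zero_iff_isEmpty, not_isEmpty_iff]
  exact ⟨⟨h.choose, h.choose_spec⟩⟩

/-- concatenation iso for the additivity of `itype` on intervals -/
def icoSumIso {x y z : L} (hxy : x ≤ y) (hyz : y ≤ z) :
    Sum.Lex (Subrel ((· < ·) : L → L → Prop) (· ∈ Set.Ico x y))
        (Subrel ((· < ·) : L → L → Prop) (· ∈ Set.Ico y z)) ≃r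
      Subrel ((· < ·) : L → L → Prop) (· ∈ Set.Ico x z) where
  toFun := Sum.elim (fun a => ⟨a.1, a.2.1, a.2.2.trans_le hyz⟩)
    (fun a => ⟨a.1, hxy.trans a.2.1, a.2.2⟩)
  invFun := fun a => if h : a.1 < y then Sum.inl ⟨a.1, a.2.1, h⟩
    else Sum.inr ⟨a.1, not_lt.1 h, a.2.2⟩
  left_inv := by
    rintro (⟨a, ha⟩ | ⟨a, ha⟩)
    · simp [ha.2]
    · simp [not_lt.2 ha.1]
  right_inv := by
    rintro ⟨a, ha⟩
    by_cases h : a < y <;> simp [h]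
  map_rel_iff' := by
    intro a b
    rcases a with a | a <;> rcases b with b | b <;>
      simp only [Equiv.coe_fn_mk, Sum.elim_inl, Sum.elim_inr, Sum.lex_inl_inl,
        Sum.lex_inr_inr, Sum.lex_inr_inl, Sum.Lex.sep, iff_true, iff_false]
    · exact Iff.rfl
    · exact a.2.2.trans_le b.2.1
    · show ¬ a.1 < b.1
      exact not_lt.2 (b.2.2.le.trans a.2.1)
    · exact Iff.rfl

lemma itype_Ico_add {x y z : L} (hxy : x ≤ y) (hyz : y ≤ z) :
    itype (Set.Ico x y) + itype (Set.Ico y z) = itype (Set.Ico x z) := by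
  rw [itype, itype, itype, ← type_sum_lex]
  exact Ordinal.type_eq.2 ⟨icoSumIso hxy hyz⟩

/-- iso between nested subrel and subset -/
def nestIso (s : Set L) (a : s) :
    Subrel (Subrel ((· < ·) : L → L → Prop) (· ∈ s)) (Subrel ((· < ·) : L → L → Prop) (· ∈ s) · a) ≃r
      Subrel ((· < ·) : L → L → Prop) (· ∈ {w ∈ s | w < a.1}) where
  toFun := fun b => ⟨b.1.1, b.1.2, b.2⟩
  invFun := fun w => ⟨⟨w.1, w.2.1⟩, w.2.2⟩
  left_inv := fun _ => rfl
  right_inv := fun _ => rfl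
  map_rel_iff' := Iff.rfl

lemma typein_subrel (s : Set L) (a : s) :
    typein (Subrel ((· < ·) : L → L → Prop) (· ∈ s)) a = itype {w ∈ s | w < a.1} := by
  rw [← type_subrel]
  exact Ordinal.type_eq.2 ⟨nestIso s a⟩

lemma itype_le_of_initial {s : Set L} {o : Ordinal} (h : ∀ v ∈ s, itype {w ∈ s | w < v} < o) :
    itype s ≤ o := by
  by_contra hc
  push_neg at hc
  obtain ⟨a, ha⟩ := typein_surj (Subrel ((· < ·) : L → L → Prop) (· ∈ s)) hc
  rw [typein_subrel] at ha
  exact absurd (h a.1 a.2) (by rw [ha]; exact lt_irrefl o)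

lemma finite_lt_nat (n : ℕ) : {o : Ordinal | o < (n : Ordinal)}.Finite := by
  have hsub : {o : Ordinal | o < (n : Ordinal)} ⊆ (fun k : ℕ => (k : Ordinal)) '' (Set.Iio n) := by
    intro o ho
    simp only [Set.mem_setOf_eq] at ho
    obtain ⟨k, rfl⟩ := Ordinal.lt_omega0.1 (ho.trans_le (Ordinal.nat_lt_omega0 n).le)
    exact ⟨k, Set.mem_Iio.2 (by exact_mod_cast ho), rfl⟩
  exact ((Set.finite_Iio n).image _).subset hsub

end Stmt4Aux

open Stmt4Aux in
open Ordinal in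
/-- Rosenstein, Prop. 5.7. Let `L` be a well-ordered set and
let `E α` be the `α`-th condensation equivalence: `E 0` is equality,
`E (α+1) x y` holds iff there are only finitely many `E α`-classes in the
interval between `x` and `y` (so `E 1 x y` iff that interval is finite),
and at limits `E γ = ⋃_{α<γ} E α`.  Then for `x < y`, the `α`-th condensation
classes of `x` and `y` coincide iff the order type of `[x, y)` is `< ω^α`. -/
theorem stmt4 {L : Type} [LinearOrder L] [WellFoundedLT L]
    (E : Ordinal → L → L → Prop)
    (hequiv : ∀ α, Equivalence (E α))
    (h0 : ∀ x y, E 0 x y ↔ x = y)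
    (hsucc : ∀ α x y, E (α + 1) x y ↔
      ((Set.Icc (min x y) (max x y)).image (Quot.mk (E α))).Finite)
    (hlim : ∀ γ, Order.IsSuccLimit γ → ∀ x y, E γ x y ↔ ∃ α < γ, E α x y) :
    ∀ (α : Ordinal) (x y : L), x < y →
      (E α x y ↔ Ordinal.type (Subrel ((· < ·) : L → L → Prop) (· ∈ Set.Ico x y)) < omega0 ^ α) := by
  intro α
  induction α using Ordinal.limitRecOn with
  | zero =>
    intro x y hxy
    show E 0 x y ↔ itype (Set.Ico x y) < omega0 ^ (0 : Ordinal)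
    rw [h0, opow_zero, Ordinal.lt_one_iff_zero]
    exact iff_of_false hxy.ne (itype_ne_zero ⟨x, le_refl x, hxy⟩)
  | add_one α ih =>
    intro x y hxy
    show E (Order.succ α) x y ↔ itype (Set.Ico x y) < omega0 ^ (Order.succ α)
    have hsucc' : Order.succ α = α + 1 := rfl
    rw [hsucc', hsucc α x y, min_eq_left hxy.le, max_eq_right hxy.le, ← hsucc', opow_succ]
    have wapos : (0 : Ordinal) < omega0 ^ α := opow_pos α omega0_pos
    -- the induction hypothesis, extended to `u ≤ v`
    have Eiff : ∀ u v : L, u ≤ v → (E α u v ↔ itype (Set.Ico u v) < omega0 ^ α) := by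
      intro u v huv
      rcases eq_or_lt_of_le huv with rfl | h
      · rw [Set.Ico_self]
        exact iff_of_true ((hequiv α).refl u) (by rw [itype_empty]; exact wapos)
      · exact ih u v h
    -- convexity of `E α`-classes
    have conv : ∀ u v w : L, u ≤ v → v ≤ w → E α u w → E α u v := by
      intro u v w huv hvw h
      rw [Eiff u v huv]
      rw [Eiff u w (huv.trans hvw)] at h
      exact lt_of_le_of_lt (itype_mono (Set.Ico_subset_Ico_right hvw)) h
    have quotiff : ∀ u v : L, Quot.mk (E α) u = Quot.mk (E α) v ↔ E α u v := by
      intro u v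
      rw [Quot.eq]
      exact (hequiv α).eqvGen_iff
    constructor
    · -- finitely many classes → type < ω^α · ω
      intro hfin
      have dirA : ∀ n : ℕ, ∀ u : L, u ≤ y →
          ((Set.Icc u y).image (Quot.mk (E α))).Finite →
          ((Set.Icc u y).image (Quot.mk (E α))).ncard ≤ n →
          itype (Set.Ico u y) ≤ omega0 ^ α * n := by
        intro n
        induction n with
        | zero =>
          intro u huy hfin hcard
          have hmem : Quot.mk (E α) u ∈ (Set.Icc u y).image (Quot.mk (E α)) :=
            Set.mem_image_of_mem _ (Set.mem_Icc.2 ⟨le_refl u, huy⟩)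
          have hpos : 0 < ((Set.Icc u y).image (Quot.mk (E α))).ncard :=
            (Set.ncard_pos hfin).2 ⟨_, hmem⟩
          omega
        | succ n ihn =>
          intro u huy hfin hcard
          by_cases hEy : E α u y
          · refine le_trans ((Eiff u y huy).1 hEy).le ?_
            calc omega0 ^ α = omega0 ^ α * 1 := (mul_one _).symm
              _ ≤ omega0 ^ α * (n + 1 : ℕ) := by
                  apply mul_le_mul_right
                  exact_mod_cast Nat.one_le_iff_ne_zero.2 (Nat.succ_ne_zero n)
          · have huy' : u < y := lt_of_le_of_ne huy (fun h => hEy (h ▸ (hequiv α).refl u))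
            set T : Set L := {w | u ≤ w ∧ w ≤ y ∧ ¬ E α u w} with hT
            have hTne : T.Nonempty := ⟨y, huy, le_refl y, hEy⟩
            set z := wellFounded_lt.min T hTne with hz
            obtain ⟨huz, hzy, hEz⟩ := wellFounded_lt.min_mem T hTne
            have huz' : u < z := lt_of_le_of_ne huz (fun h => hEz (h ▸ (hequiv α).refl u))
            have hinit : ∀ w, u ≤ w → w < z → E α u w := by
              intro w huw hwz
              by_contra hc
              exact wellFounded_lt.not_lt_min T ⟨huw, (hwz.le.trans hzy), hc⟩ hwz
            -- the first block has type ≤ ω^α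
            have hblock : itype (Set.Ico u z) ≤ omega0 ^ α := by
              apply itype_le_of_initial
              intro v hv
              have hset : {w ∈ Set.Ico u z | w < v} = Set.Ico u v := by
                ext w
                constructor
                · rintro ⟨⟨hw1, _⟩, hw2⟩; exact ⟨hw1, hw2⟩
                · rintro ⟨hw1, hw2⟩; exact ⟨⟨hw1, hw2.trans hv.2⟩, hw2⟩
              rw [hset, ← Eiff u v hv.1]
              exact hinit v hv.1 hv.2
            -- the rest has one fewer class
            have hssub : (Set.Icc z y).image (Quot.mk (E α)) ⊆
                ((Set.Icc u y).image (Quot.mk (E α))) \ {Quot.mk (E α) u} := by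
              rintro q ⟨w, hw, rfl⟩
              refine ⟨Set.mem_image_of_mem _ ⟨huz.trans hw.1, hw.2⟩, ?_⟩
              simp only [Set.mem_singleton_iff]
              intro hq
              have hEw : E α u w := (hequiv α).symm ((quotiff w u).1 hq)
              exact hEz (conv u z w huz (hw.1) hEw)
            have hfin' : (((Set.Icc u y).image (Quot.mk (E α))) \ {Quot.mk (E α) u}).Finite :=
              hfin.subset Set.diff_subset
            have hcard' : ((Set.Icc z y).image (Quot.mk (E α))).ncard ≤ n := by
              have h1 := Set.ncard_le_ncard hssub hfin'
              have h2 : (((Set.Icc u y).image (Quot.mk (E α))) \ {Quot.mk (E α) u}).ncard =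
                  ((Set.Icc u y).image (Quot.mk (E α))).ncard - 1 :=
                Set.ncard_diff_singleton_of_mem
                  (Set.mem_image_of_mem _ (Set.mem_Icc.2 ⟨le_refl u, huy⟩))
              omega
            have hrest := ihn z hzy (hfin.subset (hssub.trans Set.diff_subset)) hcard'
            calc itype (Set.Ico u y) = itype (Set.Ico u z) + itype (Set.Ico z y) :=
                  (itype_Ico_add huz hzy).symm
              _ ≤ omega0 ^ α + omega0 ^ α * n := add_le_add hblock hrest
              _ = omega0 ^ α * (1 + n : ℕ) := by
                  push_cast
                  rw [mul_add, mul_one]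
              _ = omega0 ^ α * (n + 1 : ℕ) := by rw [Nat.add_comm]
      have := dirA ((Set.Icc x y).image (Quot.mk (E α))).ncard x hxy.le hfin (le_refl _)
      exact lt_of_le_of_lt this (mul_lt_mul_of_pos_left (nat_lt_omega0 _) wapos)
    · -- type < ω^α · ω → finitely many classes
      intro h
      classical
      obtain ⟨n', hn', hb⟩ := (lt_mul_iff_of_isSuccLimit isSuccLimit_omega0).1 h
      obtain ⟨k, rfl⟩ := Ordinal.lt_omega0.1 hn'
      -- minimum representative of the class of `u` inside `Icc x y`
      set T : L → Set L := fun u => {w | E α u w ∧ w ∈ Set.Icc x y} with hTdef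
      have hTeq : ∀ u v : L, E α u v → T u = T v := by
        intro u v huv
        ext w
        exact and_congr_left (fun _ => ⟨fun h => (hequiv α).trans ((hequiv α).symm huv) h,
          fun h => (hequiv α).trans huv h⟩)
      set mrep : L → L := fun u =>
        if h : (T u).Nonempty then wellFounded_lt.min (T u) h else x with hmrep
      have hresp : ∀ u v : L, E α u v → mrep u = mrep v := by
        intro u v huv
        simp only [hmrep, hTeq u v huv]
      set m : Quot (E α) → L := Quot.lift mrep hresp with hm
      set S := (Set.Icc x y).image (Quot.mk (E α)) with hS
      have hmq : ∀ q ∈ S, q = Quot.mk (E α) (m q) ∧ m q ∈ Set.Icc x y := by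
        rintro q ⟨u, hu, rfl⟩
        have hne : (T u).Nonempty := ⟨u, (hequiv α).refl u, hu⟩
        have hmin := wellFounded_lt.min_mem (T u) hne
        have : m (Quot.mk (E α) u) = wellFounded_lt.min (T u) hne := by
          simp only [hm, Quot.lift, hmrep, dif_pos hne]
        rw [this]
        exact ⟨(quotiff _ _).2 hmin.1 ▸ rfl, hmin.2⟩
      set g : Quot (E α) → Ordinal := fun q => itype (Set.Ico x (m q)) / omega0 ^ α with hg
      have wane : (omega0 ^ α : Ordinal) ≠ 0 := (opow_pos α omega0_pos).ne'
      have key : ∀ q1 ∈ S, ∀ q2 ∈ S, m q1 < m q2 → g q1 < g q2 := by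
        intro q1 hq1 q2 hq2 hlt
        obtain ⟨hq1', hm1⟩ := hmq q1 hq1
        obtain ⟨hq2', hm2⟩ := hmq q2 hq2
        have hnE : ¬ E α (m q1) (m q2) := by
          intro hE
          have : q1 = q2 := by
            rw [hq1', hq2']
            exact (quotiff _ _).2 hE
          exact absurd (congrArg m this) hlt.ne
        have hge : omega0 ^ α ≤ itype (Set.Ico (m q1) (m q2)) :=
          not_lt.1 (fun hc => hnE ((Eiff _ _ hlt.le).2 hc))
        have hchain : omega0 ^ α * (g q1 + 1) ≤ itype (Set.Ico x (m q2)) := by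
          calc omega0 ^ α * (g q1 + 1) = omega0 ^ α * g q1 + omega0 ^ α := by
                rw [mul_add, mul_one]
            _ ≤ itype (Set.Ico x (m q1)) + omega0 ^ α :=
                add_le_add_left (mul_div_le _ _) _
            _ ≤ itype (Set.Ico x (m q1)) + itype (Set.Ico (m q1) (m q2)) :=
                add_le_add le_rfl hge
            _ = itype (Set.Ico x (m q2)) := itype_Ico_add hm1.1 hlt.le
        have hle : g q1 + 1 ≤ g q2 := (Ordinal.le_div wane).2 hchain
        rw [Ordinal.add_one_eq_succ] at hle
        exact lt_of_lt_of_le (Order.lt_succ _) hle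
      have hinj : Set.InjOn g S := by
        intro q1 hq1 q2 hq2 hgeq
        by_contra hne
        have hmne : m q1 ≠ m q2 := by
          intro h
          exact hne (((hmq q1 hq1).1.trans (congrArg (Quot.mk (E α)) h)).trans (hmq q2 hq2).1.symm)
        rcases lt_or_gt_of_ne hmne with h | h
        · exact absurd hgeq (key q1 hq1 q2 hq2 h).ne
        · exact absurd hgeq.symm (key q2 hq2 q1 hq1 h).ne
      have himg : g '' S ⊆ {o : Ordinal | o < (k : Ordinal)} := by
        rintro o ⟨q, hq, rfl⟩
        obtain ⟨_, hm1⟩ := hmq q hq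
        have : itype (Set.Ico x (m q)) < omega0 ^ α * k :=
          lt_of_le_of_lt (itype_mono (Set.Ico_subset_Ico_right hm1.2)) hb
        exact (Ordinal.div_lt wane).2 this
      exact Set.Finite.of_finite_image ((finite_lt_nat k).subset himg) hinj
  | limit γ hγ ih =>
    intro x y hxy
    show E γ x y ↔ itype (Set.Ico x y) < omega0 ^ γ
    rw [hlim γ hγ x y]
    constructor
    · rintro ⟨β, hβ, hE⟩
      exact lt_of_lt_of_le ((ih β hβ x y hxy).1 hE) (opow_le_opow_right omega0_pos hβ.le)
    · intro h
      obtain ⟨β, hβ, hb⟩ := (lt_opow_of_isSuccLimit omega0_ne_zero hγ).1 h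
      exact ⟨β, hβ, (ih β hβ x y hxy).2 hb⟩
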